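/- arXiv:1808.07162 — 4 statements merged into one kernel-verified Lean document; each statement's English description precedes it below -/
import Mathlib

section
/- Uniqueness of positive periodic solutions for a scalar logistic-type ODE with positive forcing: let a, b, f : ℝ → ℝ be continuous and T-periodic with b(t) > 0 and f(t) > 0 for all t. Then the equation u'(t) = u(t)·(a(t) - b(t)·u(t)) + f(t) has at most one positive T-periodic solution. Specifically, if u₁, u₂ are positive T-periodic solutions with u₁(t) > u₂(t) for all t ∈ [0,T], then the function û = u₁ - u₂ satisfies û(T) < û(0), contradicting periodicity. -/
/-- If `u₁ > u₂` everywhere and both solve the ODE and are `T`-periodic, contradiction. -/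
lemma aux_stmt4 (T : ℝ) (hT : 0 < T) (a b f : ℝ → ℝ)
    (hbpos : ∀ t, 0 < b t) (hfpos : ∀ t, 0 < f t)
    (u₁ u₂ : ℝ → ℝ)
    (hu₁pos : ∀ t, 0 < u₁ t) (hu₂pos : ∀ t, 0 < u₂ t)
    (hu₁P : Function.Periodic u₁ T) (hu₂P : Function.Periodic u₂ T)
    (hu₁ : ∀ t, HasDerivAt u₁ (u₁ t * (a t - b t * u₁ t) + f t) t)
    (hu₂ : ∀ t, HasDerivAt u₂ (u₂ t * (a t - b t * u₂ t) + f t) t)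
    (hgt : ∀ t, u₂ t < u₁ t) : False := by
  set r : ℝ → ℝ := fun t => u₁ t / u₂ t with hr
  have hrd : ∀ t, HasDerivAt r
      (((u₁ t * (a t - b t * u₁ t) + f t) * u₂ t -
        u₁ t * (u₂ t * (a t - b t * u₂ t) + f t)) / (u₂ t)^2) t :=
    fun t => (hu₁ t).div (hu₂ t) (hu₂pos t).ne'
  have hneg : ∀ t, ((u₁ t * (a t - b t * u₁ t) + f t) * u₂ t -
        u₁ t * (u₂ t * (a t - b t * u₂ t) + f t)) / (u₂ t)^2 < 0 := by
    intro t
    apply div_neg_of_neg_of_pos _ (pow_pos (hu₂pos t) 2)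
    have h1 := hbpos t
    have h2 := hfpos t
    have h3 := hu₁pos t
    have h4 := hu₂pos t
    have h5 := hgt t
    nlinarith [mul_pos (mul_pos h1 h3) h4]
  have hanti : StrictAnti r := strictAnti_of_hasDerivAt_neg hrd hneg
  have : r T = r 0 := by
    simp only [hr]
    rw [show (T : ℝ) = 0 + T by ring, hu₁P 0, hu₂P 0]
  exact absurd this (hanti hT).ne

/-- Uniqueness of positive periodic solutions for the forced logistic ODE
`u' = u (a - b u) + f` with continuous `T`-periodic coefficients, `b > 0`, `f > 0`:
there is at most one positive `T`-periodic solution. -/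
theorem stmt4 (T : ℝ) (hT : 0 < T) (a b f : ℝ → ℝ)
    (ha : Continuous a) (hb : Continuous b) (hf : Continuous f)
    (haP : Function.Periodic a T) (hbP : Function.Periodic b T)
    (hfP : Function.Periodic f T)
    (hbpos : ∀ t, 0 < b t) (hfpos : ∀ t, 0 < f t)
    (u₁ u₂ : ℝ → ℝ)
    (hu₁pos : ∀ t, 0 < u₁ t) (hu₂pos : ∀ t, 0 < u₂ t)
    (hu₁P : Function.Periodic u₁ T) (hu₂P : Function.Periodic u₂ T)
    (hu₁ : ∀ t, HasDerivAt u₁ (u₁ t * (a t - b t * u₁ t) + f t) t)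
    (hu₂ : ∀ t, HasDerivAt u₂ (u₂ t * (a t - b t * u₂ t) + f t) t) :
    u₁ = u₂ := by
  have hdu₁ : Differentiable ℝ u₁ := fun t => (hu₁ t).differentiableAt
  have hdu₂ : Differentiable ℝ u₂ := fun t => (hu₂ t).differentiableAt
  have hcu₁ : Continuous u₁ := hdu₁.continuous
  have hcu₂ : Continuous u₂ := hdu₂.continuous
  have hcc : Continuous (fun t => a t - b t * (u₁ t + u₂ t)) :=
    ha.sub (hb.mul (hcu₁.add hcu₂))
  have hCd : ∀ t, HasDerivAt (fun x => ∫ s in (0:ℝ)..x, (a s - b s * (u₁ s + u₂ s)))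
      (a t - b t * (u₁ t + u₂ t)) t := fun t =>
    intervalIntegral.integral_hasDerivAt_right (hcc.intervalIntegrable 0 t)
      (hcc.stronglyMeasurableAtFilter _ _) hcc.continuousAt
  set C : ℝ → ℝ := fun x => ∫ s in (0:ℝ)..x, (a s - b s * (u₁ s + u₂ s)) with hC
  have hvd : ∀ t, HasDerivAt (fun x => u₁ x - u₂ x)
      ((a t - b t * (u₁ t + u₂ t)) * (u₁ t - u₂ t)) t := by
    intro t
    have := (hu₁ t).sub (hu₂ t)
    exact this.congr_deriv (by ring)
  have hwd : ∀ t, HasDerivAt (fun x => (u₁ x - u₂ x) * Real.exp (-C x)) 0 t := by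
    intro t
    have he : HasDerivAt (fun x => Real.exp (-C x))
        (-(a t - b t * (u₁ t + u₂ t)) * Real.exp (-C t)) t := by
      have := ((hCd t).neg).exp
      exact this.congr_deriv (by simp only [Pi.neg_apply]; ring)
    have := (hvd t).mul he
    exact this.congr_deriv (by ring)
  have hwc : ∀ t, (u₁ t - u₂ t) * Real.exp (-C t) = (u₁ 0 - u₂ 0) * Real.exp (-C 0) :=
    fun t => is_const_of_deriv_eq_zero (fun x => (hwd x).differentiableAt)
      (fun x => (hwd x).deriv) t 0
  have hC0 : C 0 = 0 := by simp [hC]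
  have hvform : ∀ t, u₁ t - u₂ t = (u₁ 0 - u₂ 0) * Real.exp (C t) := by
    intro t
    have h := hwc t
    rw [hC0, neg_zero, Real.exp_zero, mul_one] at h
    have hepos := (Real.exp_pos (-C t)).ne'
    rw [Real.exp_neg] at h
    field_simp at h
    rw [h, mul_comm]
  rcases lt_trichotomy (u₁ 0 - u₂ 0) 0 with h0 | h0 | h0
  · exact (aux_stmt4 T hT a b f hbpos hfpos u₂ u₁ hu₂pos hu₁pos hu₂P hu₁P hu₂ hu₁
      (fun t => by have := hvform t; have := Real.exp_pos (C t); nlinarith)).elim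
  · funext t
    have := hvform t
    rw [h0, zero_mul] at this
    linarith
  · exact (aux_stmt4 T hT a b f hbpos hfpos u₁ u₂ hu₁pos hu₂pos hu₁P hu₂P hu₁ hu₂
      (fun t => by have := hvform t; have := Real.exp_pos (C t); nlinarith)).elim
end

section
/- Order preservation for solutions of a two-component cooperative-type iteration: suppose (ū, u̲) solve the coupled system u̲' = L[u̲] + u̲(a - b u̲ - c G∗ū), ū' = L[ū] + ū(a - b ū - c G∗u̲), with u̲(·,0) ≤ ū(·,0), where L[w](x) = ∫J(y-x)w(y)dy - w(x), a, b, c continuous bounded with b > 0 and c ≥ 0, and both ū, u̲ are bounded and nonnegative. Then for the weighted difference ω = e^{ht}(ū - u̲) with h large enough that p(x,t) := h + a - 1 - b(ū+u̲) - c G∗u̲ ≥ 0, the function ω satisfies ω_t ≥ ∫J(y-x)ω(y,t)dy + p ω + c ū G∗ω with ω(·,0) ≥ 0 and the coefficient of G∗ω nonnegative; consequently ω ≥ 0 and hence u̲(x,t) ≤ ū(x,t) for all t ≥ 0. -/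
open MeasureTheory

/-- Order preservation for the two-component cooperative-type system: if `(ū, u̲)` solve
`u̲_t = L[u̲] + u̲(a - b u̲ - c G∗ū)`, `ū_t = L[ū] + ū(a - b ū - c G∗u̲)` with
`u̲(·,0) ≤ ū(·,0)`, both bounded nonnegative, `b > 0`, `c ≥ 0`, and `h` is large enough
that `p := h + a - 1 - b(ū+u̲) - c G∗u̲ ≥ 0`, then `ω = e^{ht}(ū - u̲) ≥ 0` and hence
`u̲ ≤ ū` for all `t ≥ 0`. -/
theorem stmt11 {N : ℕ} (J G : (Fin N → ℝ) → ℝ) (hJ0 : ∀ z, 0 ≤ J z) (hG0 : ∀ z, 0 ≤ G z)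
    (hJint : Integrable J) (hGint : Integrable G)
    (hJmass : ∫ z, J z = 1) (hGmass : ∫ z, G z = 1)
    (a b c : (Fin N → ℝ) → ℝ → ℝ)
    (ha : Continuous fun p : (Fin N → ℝ) × ℝ => a p.1 p.2)
    (hab : ∃ C, ∀ x t, |a x t| ≤ C)
    (hbc : Continuous fun p : (Fin N → ℝ) × ℝ => b p.1 p.2)
    (hbb : ∃ C, ∀ x t, |b x t| ≤ C)
    (hcc : Continuous fun p : (Fin N → ℝ) × ℝ => c p.1 p.2)
    (hcb : ∃ C, ∀ x t, |c x t| ≤ C)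
    (hbpos : ∀ x t, 0 < b x t) (hcnonneg : ∀ x t, 0 ≤ c x t)
    (ubar ulow : (Fin N → ℝ) → ℝ → ℝ)
    (hubd : ∃ C, ∀ x t, |ubar x t| ≤ C) (hlbd : ∃ C, ∀ x t, |ulow x t| ≤ C)
    (hunn : ∀ x t, 0 ≤ t → 0 ≤ ubar x t) (hlnn : ∀ x t, 0 ≤ t → 0 ≤ ulow x t)
    (hubarJ : ∀ x t, 0 ≤ t → Integrable (fun y => J (y - x) * ubar y t))
    (hlowJ : ∀ x t, 0 ≤ t → Integrable (fun y => J (y - x) * ulow y t))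
    (hubarG : ∀ x t, 0 ≤ t → Integrable (fun y => G (y - x) * ubar y t))
    (hlowG : ∀ x t, 0 ≤ t → Integrable (fun y => G (y - x) * ulow y t))
    (hlowEq : ∀ x t, 0 ≤ t → HasDerivAt (fun s => ulow x s)
      (((∫ y, J (y - x) * ulow y t) - ulow x t) +
        ulow x t * (a x t - b x t * ulow x t - c x t * ∫ y, G (y - x) * ubar y t)) t)
    (hbarEq : ∀ x t, 0 ≤ t → HasDerivAt (fun s => ubar x s)
      (((∫ y, J (y - x) * ubar y t) - ubar x t) +
        ubar x t * (a x t - b x t * ubar x t - c x t * ∫ y, G (y - x) * ulow y t)) t)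
    (hinit : ∀ x, ulow x 0 ≤ ubar x 0)
    (h : ℝ)
    (hp : ∀ x t, 0 ≤ t →
      0 ≤ h + a x t - 1 - b x t * (ubar x t + ulow x t) -
        c x t * ∫ y, G (y - x) * ulow y t) :
    ∀ x t, 0 ≤ t →
      0 ≤ Real.exp (h * t) * (ubar x t - ulow x t) ∧ ulow x t ≤ ubar x t := by

  intro x₀ t ht
  obtain ⟨Ca, hCa⟩ := hab
  obtain ⟨Cc, hCc⟩ := hcb
  obtain ⟨Cu, hCu⟩ := hubd
  obtain ⟨Cl, hCl⟩ := hlbd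
  have hCa0 : 0 ≤ Ca := le_trans (abs_nonneg _) (hCa 0 0)
  have hCc0 : 0 ≤ Cc := le_trans (abs_nonneg _) (hCc 0 0)
  have hCu0 : 0 ≤ Cu := le_trans (abs_nonneg _) (hCu 0 0)
  have hCl0 : 0 ≤ Cl := le_trans (abs_nonneg _) (hCl 0 0)
  set θ : (Fin N → ℝ) → ℝ → ℝ := fun x s => Real.exp (h * s) * (ulow x s - ubar x s)
    with hθdef
  set ψ : ℝ → ℝ := fun s => ⨆ x : Fin N → ℝ, max (θ x s) 0 with hψdef
  have hθub : ∀ (x : Fin N → ℝ) (s : ℝ), θ x s ≤ Real.exp (h * s) * (Cu + Cl) := by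
    intro x s
    have h1 : ulow x s - ubar x s ≤ Cu + Cl := by
      have h2 := abs_le.1 (hCu x s); have h3 := abs_le.1 (hCl x s); cases h2; cases h3; linarith
    have h2 : (0:ℝ) ≤ Real.exp (h * s) := (Real.exp_pos _).le
    simpa only [hθdef] using mul_le_mul_of_nonneg_left h1 h2
  have hbdd : ∀ s : ℝ, BddAbove (Set.range fun x : Fin N → ℝ => max (θ x s) 0) := by
    intro s
    refine ⟨max (Real.exp (h * s) * (Cu + Cl)) 0, ?_⟩
    rintro _ ⟨x, rfl⟩
    exact max_le_max (hθub x s) le_rfl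
  have hθψ : ∀ (x : Fin N → ℝ) (s : ℝ), θ x s ≤ ψ s := fun x s =>
    le_trans (le_max_left _ _) (le_ciSup (hbdd s) x)
  have hψnn : ∀ s : ℝ, 0 ≤ ψ s := fun s =>
    le_trans (le_max_right _ _) (le_ciSup (hbdd s) x₀)
  set M : ℝ := Real.exp (|h| * t) * (Cu + Cl) with hMdef
  have hM0 : 0 ≤ M := by
    rw [hMdef]; exact mul_nonneg (Real.exp_pos _).le (by linarith)
  have hψM : ∀ s : ℝ, 0 ≤ s → s ≤ t → ψ s ≤ M := by
    intro s hs hst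
    refine ciSup_le fun x => max_le (le_trans (hθub x s) ?_) hM0
    have h1 : h * s ≤ |h| * t := le_trans
      (mul_le_mul_of_nonneg_right (le_abs_self h) hs)
      (mul_le_mul_of_nonneg_left hst (abs_nonneg h))
    rw [hMdef]
    exact mul_le_mul_of_nonneg_right (Real.exp_le_exp.2 h1) (by linarith)
  set K : ℝ := 1 + (|h| + Ca) + Cc * Cl with hKdef
  have hK0 : 0 ≤ K := by
    rw [hKdef]
    have h1 := abs_nonneg h
    have h2 := mul_nonneg hCc0 hCl0
    linarith
  have hkey : ∀ (x : Fin N → ℝ) (s : ℝ), 0 ≤ s →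
      ∃ D : ℝ, HasDerivAt (θ x) D s ∧ D ≤ K * ψ s := by
    intro x s hs
    have hIu := hubarJ x s hs
    have hIl := hlowJ x s hs
    have hGu := hubarG x s hs
    have hGl := hlowG x s hs
    have hexp : HasDerivAt (fun s : ℝ => Real.exp (h * s)) (Real.exp (h * s) * h) s := by
      have h1 : HasDerivAt (fun s : ℝ => h * s) h s := by
        simpa using (hasDerivAt_id s).const_mul h
      exact (Real.hasDerivAt_exp (h * s)).comp s h1
    have hdiff : HasDerivAt (fun s => ulow x s - ubar x s)
        ((((∫ y, J (y - x) * ulow y s) - ulow x s) +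
          ulow x s * (a x s - b x s * ulow x s - c x s * ∫ y, G (y - x) * ubar y s)) -
         (((∫ y, J (y - x) * ubar y s) - ubar x s) +
          ubar x s * (a x s - b x s * ubar x s - c x s * ∫ y, G (y - x) * ulow y s))) s :=
      (hlowEq x s hs).sub (hbarEq x s hs)
    have hθd : HasDerivAt (θ x)
        (Real.exp (h * s) * h * (ulow x s - ubar x s) + Real.exp (h * s) *
          ((((∫ y, J (y - x) * ulow y s) - ulow x s) +
            ulow x s * (a x s - b x s * ulow x s - c x s * ∫ y, G (y - x) * ubar y s)) -
           (((∫ y, J (y - x) * ubar y s) - ubar x s) +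
            ubar x s * (a x s - b x s * ubar x s - c x s * ∫ y, G (y - x) * ulow y s)))) s := by
      simp only [hθdef]
      exact hexp.mul hdiff
    have hISJ : (∫ y, J (y - x) * θ y s) = Real.exp (h * s) *
        ((∫ y, J (y - x) * ulow y s) - ∫ y, J (y - x) * ubar y s) := by
      rw [← integral_sub hIl hIu, ← integral_const_mul]
      refine integral_congr_ae (Filter.EventuallyEq.of_eq (funext fun y => ?_))
      simp only [hθdef]; ring
    have hISG : (∫ y, G (y - x) * θ y s) = Real.exp (h * s) *
        ((∫ y, G (y - x) * ulow y s) - ∫ y, G (y - x) * ubar y s) := by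
      rw [← integral_sub hGl hGu, ← integral_const_mul]
      refine integral_congr_ae (Filter.EventuallyEq.of_eq (funext fun y => ?_))
      simp only [hθdef]; ring
    have hident : Real.exp (h * s) * h * (ulow x s - ubar x s) + Real.exp (h * s) *
          ((((∫ y, J (y - x) * ulow y s) - ulow x s) +
            ulow x s * (a x s - b x s * ulow x s - c x s * ∫ y, G (y - x) * ubar y s)) -
           (((∫ y, J (y - x) * ubar y s) - ubar x s) +
            ubar x s * (a x s - b x s * ubar x s - c x s * ∫ y, G (y - x) * ulow y s)))
        = (∫ y, J (y - x) * θ y s) +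
          (h + a x s - 1 - b x s * (ubar x s + ulow x s) -
            c x s * ∫ y, G (y - x) * ulow y s) * θ x s +
          (c x s * ulow x s) * ∫ y, G (y - x) * θ y s := by
      rw [hISJ, hISG]
      simp only [hθdef]
      ring
    refine ⟨_, hθd, ?_⟩
    rw [hident]
    have hJθ_int : Integrable (fun y => J (y - x) * θ y s) :=
      ((hIl.sub hIu).const_mul (Real.exp (h * s))).congr
        (Filter.EventuallyEq.of_eq (funext fun y => by simp only [hθdef, Pi.sub_apply]; ring))
    have hGθ_int : Integrable (fun y => G (y - x) * θ y s) :=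
      ((hGl.sub hGu).const_mul (Real.exp (h * s))).congr
        (Filter.EventuallyEq.of_eq (funext fun y => by simp only [hθdef, Pi.sub_apply]; ring))
    have hJψ : (∫ y, J (y - x) * θ y s) ≤ ψ s := by
      have h1 : (∫ y, J (y - x) * θ y s) ≤ ∫ y, J (y - x) * ψ s := by
        refine integral_mono hJθ_int ((hJint.comp_sub_right x).mul_const _) fun y => ?_
        exact mul_le_mul_of_nonneg_left (hθψ y s) (hJ0 _)
      calc (∫ y, J (y - x) * θ y s) ≤ ∫ y, J (y - x) * ψ s := h1
        _ = (∫ y, J (y - x)) * ψ s := by rw [integral_mul_const]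
        _ = ψ s := by rw [integral_sub_right_eq_self J x, hJmass, one_mul]
    have hGψ : (∫ y, G (y - x) * θ y s) ≤ ψ s := by
      have h1 : (∫ y, G (y - x) * θ y s) ≤ ∫ y, G (y - x) * ψ s := by
        refine integral_mono hGθ_int ((hGint.comp_sub_right x).mul_const _) fun y => ?_
        exact mul_le_mul_of_nonneg_left (hθψ y s) (hG0 _)
      calc (∫ y, G (y - x) * θ y s) ≤ ∫ y, G (y - x) * ψ s := h1
        _ = (∫ y, G (y - x)) * ψ s := by rw [integral_mul_const]
        _ = ψ s := by rw [integral_sub_right_eq_self G x, hGmass, one_mul]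
    have hp0 : 0 ≤ h + a x s - 1 - b x s * (ubar x s + ulow x s) -
        c x s * ∫ y, G (y - x) * ulow y s := hp x s hs
    have hpub : h + a x s - 1 - b x s * (ubar x s + ulow x s) -
        c x s * ∫ y, G (y - x) * ulow y s ≤ |h| + Ca := by
      have h1 : a x s ≤ Ca := (abs_le.1 (hCa x s)).2
      have h2 : h ≤ |h| := le_abs_self h
      have h3 : 0 ≤ b x s * (ubar x s + ulow x s) :=
        mul_nonneg (hbpos x s).le (by have := hunn x s hs; have := hlnn x s hs; linarith)
      have h4 : 0 ≤ c x s * ∫ y, G (y - x) * ulow y s :=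
        mul_nonneg (hcnonneg x s)
          (integral_nonneg fun y => mul_nonneg (hG0 _) (hlnn y s hs))
      linarith
    have hterm2 : (h + a x s - 1 - b x s * (ubar x s + ulow x s) -
          c x s * ∫ y, G (y - x) * ulow y s) * θ x s ≤ (|h| + Ca) * ψ s :=
      le_trans (mul_le_mul_of_nonneg_left (hθψ x s) hp0)
        (mul_le_mul_of_nonneg_right hpub (hψnn s))
    have hq0 : 0 ≤ c x s * ulow x s := mul_nonneg (hcnonneg x s) (hlnn x s hs)
    have hqub : c x s * ulow x s ≤ Cc * Cl := by
      have h1 : c x s ≤ Cc := le_trans (le_abs_self _) (hCc x s)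
      have h2 : ulow x s ≤ Cl := (abs_le.1 (hCl x s)).2
      exact mul_le_mul h1 h2 (hlnn x s hs) hCc0
    have hterm3 : (c x s * ulow x s) * ∫ y, G (y - x) * θ y s ≤ Cc * Cl * ψ s :=
      le_trans (mul_le_mul_of_nonneg_left hGψ hq0)
        (mul_le_mul_of_nonneg_right hqub (hψnn s))
    have hKeq : (1 : ℝ) * ψ s + (|h| + Ca) * ψ s + Cc * Cl * ψ s = K * ψ s := by
      rw [hKdef]; ring
    linarith
  have hind : ∀ n : ℕ, ∀ s : ℝ, 0 ≤ s → s ≤ t →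
      ψ s ≤ M * K ^ n * s ^ n / (n.factorial : ℝ) := by
    intro n
    induction n with
    | zero => intro s hs hst; simpa using hψM s hs hst
    | succ n ih =>
      intro s₀ hs₀ hst₀
      have hCn0 : 0 ≤ M * K ^ (n + 1) / ((n + 1).factorial : ℝ) :=
        div_nonneg (mul_nonneg hM0 (pow_nonneg hK0 _)) (Nat.cast_nonneg _)
      have hbound : ∀ x : Fin N → ℝ,
          θ x s₀ ≤ (M * K ^ (n + 1) / ((n + 1).factorial : ℝ)) * s₀ ^ (n + 1) := by
        intro x
        set Cn : ℝ := M * K ^ (n + 1) / ((n + 1).factorial : ℝ) with hCndef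
        have hgd : ∀ s : ℝ, 0 ≤ s → ∃ D : ℝ,
            HasDerivAt (fun r => θ x r - Cn * r ^ (n + 1)) D s ∧
            D ≤ K * ψ s - Cn * (((n : ℝ) + 1) * s ^ n) := by
          intro s hs
          obtain ⟨D, hD, hDle⟩ := hkey x s hs
          have hpow : HasDerivAt (fun r : ℝ => Cn * r ^ (n + 1))
              (Cn * (((n : ℝ) + 1) * s ^ n)) s := by
            refine ((hasDerivAt_pow (n + 1) s).const_mul Cn).congr_deriv ?_
            push_cast [Nat.add_sub_cancel]
            ring
          exact ⟨D - Cn * (((n : ℝ) + 1) * s ^ n), hD.sub hpow, by linarith⟩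
        have hanti : AntitoneOn (fun r => θ x r - Cn * r ^ (n + 1)) (Set.Icc 0 s₀) := by
          refine antitoneOn_of_deriv_nonpos (convex_Icc 0 s₀) ?_ ?_ ?_
          · intro s hsm
            obtain ⟨D, hD, _⟩ := hgd s hsm.1
            exact hD.continuousAt.continuousWithinAt
          · intro s hsm
            rw [interior_Icc] at hsm
            obtain ⟨D, hD, _⟩ := hgd s hsm.1.le
            exact hD.differentiableAt.differentiableWithinAt
          · intro s hsm
            rw [interior_Icc] at hsm
            obtain ⟨D, hD, hDle⟩ := hgd s hsm.1.le
            rw [hD.deriv]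
            have hψs := ih s hsm.1.le (le_trans hsm.2.le hst₀)
            have hKψ : K * ψ s ≤ K * (M * K ^ n * s ^ n / (n.factorial : ℝ)) :=
              mul_le_mul_of_nonneg_left hψs hK0
            have heq : K * (M * K ^ n * s ^ n / (n.factorial : ℝ))
                = Cn * (((n : ℝ) + 1) * s ^ n) := by
              rw [hCndef, Nat.factorial_succ]
              have hfac : ((n.factorial : ℝ)) ≠ 0 := by positivity
              push_cast
              field_simp
              ring
            have h2 : K * ψ s ≤ Cn * (((n : ℝ) + 1) * s ^ n) := le_of_le_of_eq hKψ heq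
            linarith
        have h0mem : (0:ℝ) ∈ Set.Icc (0:ℝ) s₀ := ⟨le_rfl, hs₀⟩
        have hsmem : s₀ ∈ Set.Icc (0:ℝ) s₀ := ⟨hs₀, le_rfl⟩
        have hmono := hanti h0mem hsmem hs₀
        have hg0 : θ x 0 - Cn * (0:ℝ) ^ (n + 1) ≤ 0 := by
          have h1 : (0:ℝ) ^ (n + 1) = 0 := zero_pow (Nat.succ_ne_zero n)
          simp only [hθdef, h1, mul_zero, sub_zero, Real.exp_zero, one_mul]
          linarith [hinit x]
        simp only at hmono
        linarith
      refine ciSup_le fun x => max_le (le_trans (hbound x) (le_of_eq (by ring))) ?_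
      exact div_nonneg (mul_nonneg (mul_nonneg hM0 (pow_nonneg hK0 _))
        (pow_nonneg hs₀ _)) (Nat.cast_nonneg _)
  have hlim : ψ t ≤ 0 := by
    have htend : Filter.Tendsto (fun n : ℕ => M * K ^ n * t ^ n / (n.factorial : ℝ))
        Filter.atTop (nhds 0) := by
      have h1 := (FloorSemiring.tendsto_pow_div_factorial_atTop (K * t)).const_mul M
      rw [mul_zero] at h1
      refine h1.congr fun n => ?_
      rw [mul_pow]; ring
    exact ge_of_tendsto' htend fun n => hind n t ht le_rfl
  have hfinal : θ x₀ t ≤ 0 := le_trans (hθψ x₀ t) hlim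
  simp only [hθdef] at hfinal
  have hexp := Real.exp_pos (h * t)
  constructor
  · nlinarith
  · nlinarith
end

section
/- Pointwise ODE system comparison for spatially homogeneous bounds: let a, b, c : ℝ → ℝ be continuous T-periodic with b(t) ≥ b_L > c_M ≥ c(t) ≥ 0. Suppose (ū, v̲) : [0,∞) → ℝ² is a solution of ū' = ū(a - b ū - c v̲), v̲' = v̲(a - b v̲ - c ū) with ū(0) ≥ v̲(0) > 0. Then ū(t) ≥ v̲(t) > 0 for all t ≥ 0, and (d/dt) log(ū/v̲) = -(b(t) - c(t))(ū - v̲) ≤ 0, so t ↦ ū(t)/v̲(t) is nonincreasing. -/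
open Set

/-- Solutions of linear scalar ODEs `f' = f * g` with continuous `g` are
`f t = f 0 * exp (∫₀ᵗ g)`. -/
lemma linODE_exp {f g : ℝ → ℝ} (hg : Continuous g)
    (hf : ∀ t, HasDerivAt f (f t * g t) t) (t : ℝ) :
    f t = f 0 * Real.exp (∫ x in (0:ℝ)..t, g x) := by
  set G : ℝ → ℝ := fun s => ∫ x in (0:ℝ)..s, g x with hGdef
  have hGd : ∀ s, HasDerivAt G (g s) s := fun s =>
    intervalIntegral.integral_hasDerivAt_right (hg.intervalIntegrable 0 s)
      hg.stronglyMeasurable.stronglyMeasurableAtFilter hg.continuousAt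
  set F : ℝ → ℝ := fun s => f s * Real.exp (-G s) with hFdef
  have hFd : ∀ s, HasDerivAt F 0 s := by
    intro s
    have h1 : HasDerivAt (fun s => Real.exp (-G s)) (Real.exp (-G s) * (-g s)) s :=
      ((hGd s).neg).exp
    have h2 := (hf s).mul h1
    refine h2.congr_deriv ?_
    ring
  have hconst : F t = F 0 :=
    is_const_of_deriv_eq_zero (fun x => (hFd x).differentiableAt)
      (fun x => (hFd x).deriv) t 0
  have h0 : G 0 = 0 := intervalIntegral.integral_same
  have hE : Real.exp (G t) ≠ 0 := (Real.exp_pos _).ne'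
  simp only [hFdef, h0, neg_zero, Real.exp_zero, mul_one] at hconst
  rw [Real.exp_neg] at hconst
  field_simp at hconst
  exact hconst.trans (mul_comm _ _)

/-- Pointwise ODE system comparison for spatially homogeneous bounds: with `a, b, c`
continuous `T`-periodic, `b ≥ b_L > c_M ≥ c ≥ 0`, and `(ū, v̲)` a solution of
`ū' = ū(a - b ū - c v̲)`, `v̲' = v̲(a - b v̲ - c ū)` with `ū(0) ≥ v̲(0) > 0`, one has
`ū(t) ≥ v̲(t) > 0` for all `t ≥ 0`, the log-ratio derivative equals
`-(b - c)(ū - v̲) ≤ 0`, and `t ↦ ū/v̲` is nonincreasing on `[0,∞)`. -/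
theorem stmt17 (T : ℝ) (hT : 0 < T) (a b c : ℝ → ℝ)
    (ha : Continuous a) (hb : Continuous b) (hc : Continuous c)
    (haP : Function.Periodic a T) (hbP : Function.Periodic b T)
    (hcP : Function.Periodic c T)
    (bL cM : ℝ) (hbL : ∀ t, bL ≤ b t) (hcM : ∀ t, c t ≤ cM)
    (hc0 : ∀ t, 0 ≤ c t) (hord : cM < bL)
    (ubar vlow : ℝ → ℝ)
    (hud : ∀ t, HasDerivAt ubar (ubar t * (a t - b t * ubar t - c t * vlow t)) t)
    (hvd : ∀ t, HasDerivAt vlow (vlow t * (a t - b t * vlow t - c t * ubar t)) t)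
    (hinit : vlow 0 ≤ ubar 0) (hinitpos : 0 < vlow 0) :
    (∀ t, 0 ≤ t → 0 < vlow t ∧ vlow t ≤ ubar t) ∧
    (∀ t, 0 ≤ t →
      HasDerivAt (fun s => Real.log (ubar s / vlow s))
        (-(b t - c t) * (ubar t - vlow t)) t ∧
      -(b t - c t) * (ubar t - vlow t) ≤ 0) ∧
    AntitoneOn (fun t => ubar t / vlow t) (Ici 0) := by
  have hucont : Continuous ubar :=
    continuous_iff_continuousAt.2 fun t => (hud t).continuousAt
  have hvcont : Continuous vlow :=
    continuous_iff_continuousAt.2 fun t => (hvd t).continuousAt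
  -- positivity of vlow
  have hvpos : ∀ t, 0 < vlow t := by
    intro t
    have hgc : Continuous (fun s => a s - b s * vlow s - c s * ubar s) :=
      (ha.sub (hb.mul hvcont)).sub (hc.mul hucont)
    have := linODE_exp hgc (fun s => hvd s) t
    rw [this]
    exact mul_pos hinitpos (Real.exp_pos _)
  -- positivity of ubar
  have hupos : ∀ t, 0 < ubar t := by
    intro t
    have hgc : Continuous (fun s => a s - b s * ubar s - c s * vlow s) :=
      (ha.sub (hb.mul hucont)).sub (hc.mul hvcont)
    have := linODE_exp hgc (fun s => hud s) t
    rw [this]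
    exact mul_pos (lt_of_lt_of_le hinitpos hinit) (Real.exp_pos _)
  -- ordering
  have hord' : ∀ t, vlow t ≤ ubar t := by
    intro t
    have hgc : Continuous (fun s => a s - b s * (ubar s + vlow s)) :=
      ha.sub (hb.mul (hucont.add hvcont))
    have hdd : ∀ s, HasDerivAt (fun r => ubar r - vlow r)
        ((ubar s - vlow s) * (a s - b s * (ubar s + vlow s))) s := by
      intro s
      have h2 := (hud s).sub (hvd s)
      refine h2.congr_deriv ?_
      ring
    have := linODE_exp hgc hdd t
    have hnn : 0 ≤ (ubar 0 - vlow 0) * Real.exp (∫ x in (0:ℝ)..t,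
        a x - b x * (ubar x + vlow x)) :=
      mul_nonneg (by linarith) (Real.exp_pos _).le
    linarith [this ▸ hnn]
  have hbc : ∀ t, 0 < b t - c t := by
    intro t
    have := hbL t; have := hcM t; linarith
  have hsign : ∀ t, -(b t - c t) * (ubar t - vlow t) ≤ 0 := by
    intro t
    have h1 : 0 ≤ (b t - c t) * (ubar t - vlow t) :=
      mul_nonneg (hbc t).le (by linarith [hord' t])
    linarith
  refine ⟨fun t _ => ⟨hvpos t, hord' t⟩, fun t _ => ?_, ?_⟩
  · -- log-ratio derivative
    constructor
    · have hlogeq : (fun s => Real.log (ubar s / vlow s)) =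
          fun s => Real.log (ubar s) - Real.log (vlow s) :=
        funext fun s => Real.log_div (hupos s).ne' (hvpos s).ne'
      rw [hlogeq]
      have hdl := ((hud t).log (hupos t).ne').sub ((hvd t).log (hvpos t).ne')
      refine hdl.congr_deriv ?_
      rw [mul_div_cancel_left₀ _ (hupos t).ne', mul_div_cancel_left₀ _ (hvpos t).ne']
      ring
    · exact hsign t
  · -- antitone
    apply antitoneOn_of_deriv_nonpos (convex_Ici 0)
    · exact (hucont.div hvcont fun t => (hvpos t).ne').continuousOn
    · intro t _
      exact (((hud t).div (hvd t) (hvpos t).ne').differentiableAt).differentiableWithinAt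
    · intro t _
      rw [show (fun t => ubar t / vlow t) = ubar / vlow from rfl, ((hud t).div (hvd t) (hvpos t).ne').deriv]
      apply div_nonpos_of_nonpos_of_nonneg _ (sq_nonneg _)
      have h1 : 0 ≤ (b t - c t) * (ubar t - vlow t) :=
        mul_nonneg (hbc t).le (by linarith [hord' t])
      nlinarith [mul_pos (hupos t) (hvpos t), mul_nonneg (mul_pos (hupos t) (hvpos t)).le h1]
end

section
/- Nonnegativity preservation via an integral inequality with nonnegative kernel terms: let Ω ⊆ ℝ^N, J, G : ℝ^N → [0,∞) integrable with ∫J = ∫G = 1, h₁, h₂ : Ω × [0,∞) → ℝ continuous with 0 < h₁ ≤ h₁M < ∞ and 0 ≤ h₂ ≤ h₂M < ∞. If Φ : Ω × [0,∞) → ℝ is continuous, bounded below, satisfies Φ(·,0) ≥ 0 and the integral inequality Φ(x,t) - Φ(x,0) ≥ ∫₀ᵗ [ ∫_Ω J(y-x)Φ(y,s)dy + h₁(x,s)Φ(x,s) + h₂(x,s)∫_Ω G(y-x)Φ(y,s)dy ] ds for all x ∈ Ω, t ≥ 0, then Φ(x,t) ≥ 0 for all (x,t) ∈ Ω × [0,∞).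 -/
open MeasureTheory Set

lemma kernelBound' {N : ℕ} (Ω : Set (Fin N → ℝ)) (hΩ : MeasurableSet Ω)
    (W : (Fin N → ℝ) → ℝ) (hW0 : ∀ z, 0 ≤ W z) (hWint : Integrable W)
    (hWmass : ∫ z, W z = 1) (f : (Fin N → ℝ) → ℝ) (m : ℝ) (hm : 0 ≤ m)
    (hf : ∀ y ∈ Ω, -m ≤ f y) (x : Fin N → ℝ) :
    -m ≤ ∫ y in Ω, W (y - x) * f y := by
  by_cases hI : IntegrableOn (fun y => W (y - x) * f y) Ω volume
  · have hWx : Integrable (fun y => W (y - x)) := hWint.comp_sub_right x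
    have hWc : IntegrableOn (fun y => W (y - x) * (-m)) Ω := (hWx.mul_const _).integrableOn
    have hmono : ∫ y in Ω, W (y - x) * (-m) ≤ ∫ y in Ω, W (y - x) * f y :=
      setIntegral_mono_on hWc hI hΩ (fun y hy => mul_le_mul_of_nonneg_left (hf y hy) (hW0 _))
    have hval : ∫ y in Ω, W (y - x) * (-m) = (∫ y in Ω, W (y - x)) * (-m) :=
      integral_mul_const _ _
    have hmass' : ∫ y, W (y - x) = 1 := by
      rw [integral_sub_right_eq_self W x]; exact hWmass
    have hIle : ∫ y in Ω, W (y - x) ≤ 1 := by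
      have h := setIntegral_le_integral (μ := volume) (s := Ω) hWx
        (Filter.Eventually.of_forall fun y => hW0 _)
      rw [hmass'] at h; exact h
    have hInn : 0 ≤ ∫ y in Ω, W (y - x) := setIntegral_nonneg hΩ fun y _ => hW0 _
    nlinarith [hmono, hval]
  · rw [integral_undef hI]; linarith

/-- Nonnegativity preservation via an integral inequality with nonnegative kernel terms:
if `J, G ≥ 0` are integrable with unit mass, `0 < h₁ ≤ h₁M`, `0 ≤ h₂ ≤ h₂M`, and a
continuous, bounded-below `Φ` with `Φ(·,0) ≥ 0` satisfies
`Φ(x,t) - Φ(x,0) ≥ ∫₀ᵗ [∫_Ω J(y-x)Φ(y,s)dy + h₁ Φ + h₂ ∫_Ω G(y-x)Φ(y,s)dy] ds`,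
then `Φ ≥ 0` on `Ω × [0,∞)`. -/
theorem stmt19 {N : ℕ} (Ω : Set (Fin N → ℝ)) (hΩ : MeasurableSet Ω)
    (J G : (Fin N → ℝ) → ℝ) (hJ0 : ∀ z, 0 ≤ J z) (hG0 : ∀ z, 0 ≤ G z)
    (hJint : Integrable J) (hGint : Integrable G)
    (hJmass : ∫ z, J z = 1) (hGmass : ∫ z, G z = 1)
    (h₁ h₂ : (Fin N → ℝ) → ℝ → ℝ) (h₁M h₂M : ℝ)
    (hh₁c : Continuous fun p : (Fin N → ℝ) × ℝ => h₁ p.1 p.2)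
    (hh₂c : Continuous fun p : (Fin N → ℝ) × ℝ => h₂ p.1 p.2)
    (hh₁pos : ∀ x ∈ Ω, ∀ t, 0 ≤ t → 0 < h₁ x t ∧ h₁ x t ≤ h₁M)
    (hh₂nn : ∀ x ∈ Ω, ∀ t, 0 ≤ t → 0 ≤ h₂ x t ∧ h₂ x t ≤ h₂M)
    (Φ : (Fin N → ℝ) → ℝ → ℝ)
    (hΦc : Continuous fun p : (Fin N → ℝ) × ℝ => Φ p.1 p.2)
    (hΦbdd : ∃ C : ℝ, ∀ x ∈ Ω, ∀ t, 0 ≤ t → C ≤ Φ x t)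
    (hΦ0 : ∀ x ∈ Ω, 0 ≤ Φ x 0)
    (hineq : ∀ x ∈ Ω, ∀ t, 0 ≤ t →
      Φ x t - Φ x 0 ≥
        ∫ s in (0 : ℝ)..t,
          ((∫ y in Ω, J (y - x) * Φ y s) + h₁ x s * Φ x s +
            h₂ x s * ∫ y in Ω, G (y - x) * Φ y s)) :
    ∀ x ∈ Ω, ∀ t, 0 ≤ t → 0 ≤ Φ x t := by
  intro x₀ hx₀ t₀ ht₀
  obtain ⟨C, hC⟩ := hΦbdd
  have hh1M : 0 < h₁M :=
    lt_of_lt_of_le (hh₁pos x₀ hx₀ 0 le_rfl).1 (hh₁pos x₀ hx₀ 0 le_rfl).2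
  have hh2M : 0 ≤ h₂M := le_trans (hh₂nn x₀ hx₀ 0 le_rfl).1 (hh₂nn x₀ hx₀ 0 le_rfl).2
  set K : ℝ := 1 + h₁M + h₂M with hKdef
  have hK : 0 < K := by simp only [hKdef]; linarith
  set S : ℝ → Set ℝ :=
    fun t => insert 0 ((fun p : (Fin N → ℝ) × ℝ => -Φ p.1 p.2) '' (Ω ×ˢ Icc 0 t)) with hS
  set n : ℝ → ℝ := fun t => sSup (S t) with hn
  have hSne : ∀ t, (S t).Nonempty := fun t => ⟨0, mem_insert _ _⟩
  have hSbdd : ∀ t, BddAbove (S t) := by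
    intro t
    refine ⟨max (-C) 0, ?_⟩
    rintro y (rfl | ⟨⟨x, s⟩, ⟨hx, hs⟩, rfl⟩)
    · exact le_max_right _ _
    · exact le_trans (neg_le_neg (hC x hx s hs.1)) (le_max_left _ _)
  have hn0 : ∀ t, 0 ≤ n t := fun t => le_csSup (hSbdd t) (mem_insert _ _)
  have hmem : ∀ t, ∀ x ∈ Ω, ∀ s, 0 ≤ s → s ≤ t → -Φ x s ≤ n t := by
    intro t x hx s hs0 hst
    exact le_csSup (hSbdd t) (mem_insert_of_mem _ ⟨(x, s), ⟨hx, hs0, hst⟩, rfl⟩)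
  set F : (Fin N → ℝ) → ℝ → ℝ := fun x s =>
    (∫ y in Ω, J (y - x) * Φ y s) + h₁ x s * Φ x s +
      h₂ x s * ∫ y in Ω, G (y - x) * Φ y s with hF
  have hFb : ∀ T, ∀ x ∈ Ω, ∀ s ∈ Icc (0:ℝ) T, -(K * n T) ≤ F x s := by
    intro T x hx s hs
    have hΦlb : ∀ y ∈ Ω, -(n T) ≤ Φ y s := fun y hy => by
      have := hmem T y hy s hs.1 hs.2; linarith
    have hA : -(n T) ≤ ∫ y in Ω, J (y - x) * Φ y s :=
      kernelBound' Ω hΩ J hJ0 hJint hJmass (fun y => Φ y s) (n T) (hn0 T) hΦlb x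
    have hD0 : -(n T) ≤ ∫ y in Ω, G (y - x) * Φ y s :=
      kernelBound' Ω hΩ G hG0 hGint hGmass (fun y => Φ y s) (n T) (hn0 T) hΦlb x
    have hΦx : -(n T) ≤ Φ x s := hΦlb x hx
    obtain ⟨hh1p, hh1le⟩ := hh₁pos x hx s hs.1
    obtain ⟨hh2p, hh2le⟩ := hh₂nn x hx s hs.1
    have hB : -(h₁M * n T) ≤ h₁ x s * Φ x s := by
      rcases le_or_gt 0 (Φ x s) with h | h
      · have : 0 ≤ h₁ x s * Φ x s := mul_nonneg hh1p.le h
        nlinarith [hn0 T]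
      · have h1 : h₁M * Φ x s ≤ h₁ x s * Φ x s :=
          mul_le_mul_of_nonpos_right hh1le h.le
        have h2 : h₁M * (-(n T)) ≤ h₁M * Φ x s :=
          mul_le_mul_of_nonneg_left hΦx hh1M.le
        nlinarith
    have hD : -(h₂M * n T) ≤ h₂ x s * ∫ y in Ω, G (y - x) * Φ y s := by
      have h1 : h₂ x s * (-(n T)) ≤ h₂ x s * ∫ y in Ω, G (y - x) * Φ y s :=
        mul_le_mul_of_nonneg_left hD0 hh2p
      nlinarith [hn0 T]
    have heq : -(K * n T) = -(n T) + -(h₁M * n T) + -(h₂M * n T) := by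
      simp only [hKdef]; ring
    rw [hF, heq]
    exact add_le_add (add_le_add hA hB) hD
  have key : ∀ a ≥ (0:ℝ), n a = 0 → ∀ t, a ≤ t → t ≤ a + 1 / (2 * K) → n t = 0 := by
    intro a ha hna t hat hta
    have hta' : (0:ℝ) ≤ t - a := by linarith
    have hrhs : (0:ℝ) ≤ K * (t - a) * n t :=
      mul_nonneg (mul_nonneg hK.le hta') (hn0 t)
    have hbnd : n t ≤ K * (t - a) * n t := by
      apply csSup_le (hSne t)
      rintro y (rfl | ⟨⟨x, s⟩, ⟨hx, hs0, hst⟩, rfl⟩)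
      · exact hrhs
      · show -Φ x s ≤ K * (t - a) * n t
        have hΦ00 : 0 ≤ Φ x 0 := hΦ0 x hx
        by_cases hFI : IntervalIntegrable (F x) volume 0 s
        · have hΦineq : Φ x s - Φ x 0 ≥ ∫ u in (0:ℝ)..s, F x u := by
            simp only [hF]; exact hineq x hx s hs0
          rcases le_or_gt s a with hsa | has
          · have hmono : ∫ u in (0:ℝ)..s, (0:ℝ) ≤ ∫ u in (0:ℝ)..s, F x u := by
              apply intervalIntegral.integral_mono_on hs0 intervalIntegrable_const hFI
              intro u hu
              have h7 := hFb a x hx u ⟨hu.1, le_trans hu.2 hsa⟩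
              rw [hna] at h7; simpa using h7
            have hmono' : (0:ℝ) ≤ ∫ u in (0:ℝ)..s, F x u := by simpa using hmono
            linarith
          · have hI1 : IntervalIntegrable (F x) volume 0 a :=
              hFI.mono_set (by rw [uIcc_of_le hs0, uIcc_of_le ha]; exact Icc_subset_Icc le_rfl has.le)
            have hI2 : IntervalIntegrable (F x) volume a s :=
              hFI.mono_set (by rw [uIcc_of_le hs0, uIcc_of_le has.le]; exact Icc_subset_Icc ha le_rfl)
            have hsplit : (∫ u in (0:ℝ)..a, F x u) + ∫ u in a..s, F x u = ∫ u in (0:ℝ)..s, F x u :=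
              intervalIntegral.integral_add_adjacent_intervals hI1 hI2
            have hpart1 : ∫ u in (0:ℝ)..a, (0:ℝ) ≤ ∫ u in (0:ℝ)..a, F x u := by
              apply intervalIntegral.integral_mono_on ha intervalIntegrable_const hI1
              intro u hu
              have h7 := hFb a x hx u hu
              rw [hna] at h7; simpa using h7
            have hpart1' : (0:ℝ) ≤ ∫ u in (0:ℝ)..a, F x u := by simpa using hpart1
            have hpart2 : ∫ u in a..s, (-(K * n t)) ≤ ∫ u in a..s, F x u := by
              apply intervalIntegral.integral_mono_on has.le intervalIntegrable_const hI2
              intro u hu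
              exact hFb t x hx u ⟨le_trans ha hu.1, le_trans hu.2 hst⟩
            have hpc : ∫ u in a..s, (-(K * n t)) = (s - a) * (-(K * n t)) := by
              rw [intervalIntegral.integral_const]; simp [smul_eq_mul]
            have hsa' : (s - a) * (K * n t) ≤ (t - a) * (K * n t) := by
              apply mul_le_mul_of_nonneg_right (by linarith) (mul_nonneg hK.le (hn0 t))
            rw [hpc] at hpart2
            nlinarith [hΦineq, hsplit, hpart1', hpart2, hΦ00]
        · have hjunk : (∫ u in (0:ℝ)..s, F x u) = 0 := intervalIntegral.integral_undef hFI
          have hΦineq : Φ x s - Φ x 0 ≥ ∫ u in (0:ℝ)..s, F x u := by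
            simp only [hF]; exact hineq x hx s hs0
          rw [hjunk] at hΦineq
          linarith
    have hfac : K * (t - a) ≤ 1 / 2 := by
      have h8 : t - a ≤ 1 / (2 * K) := by linarith
      calc K * (t - a) ≤ K * (1 / (2 * K)) := mul_le_mul_of_nonneg_left h8 hK.le
        _ = 1 / 2 := by field_simp
    nlinarith [hn0 t, hbnd, mul_nonneg hK.le (hn0 t)]
  have hn00 : n 0 = 0 := by
    have hle : n 0 ≤ 0 := by
      apply csSup_le (hSne 0)
      rintro y (rfl | ⟨⟨x, s⟩, ⟨hx, hs⟩, rfl⟩)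
      · exact le_refl 0
      · show -Φ x s ≤ 0
        have hs0 : s = 0 := le_antisymm hs.2 hs.1
        subst hs0
        linarith [hΦ0 x hx]
    linarith [hn0 0]
  have main : ∀ i : ℕ, ∀ t, 0 ≤ t → t ≤ i * (1 / (2 * K)) → n t = 0 := by
    intro i
    induction i with
    | zero =>
      intro t ht0 ht1
      simp only [Nat.cast_zero, zero_mul] at ht1
      have : t = 0 := le_antisymm ht1 ht0
      rw [this]; exact hn00
    | succ k ih =>
      intro t ht0 ht1
      rcases le_or_gt t (k * (1 / (2 * K))) with h | h
      · exact ih t ht0 h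
      · have hk0 : (0:ℝ) ≤ k * (1 / (2 * K)) := by positivity
        have hnk : n (k * (1 / (2 * K))) = 0 := ih _ hk0 le_rfl
        refine key _ hk0 hnk t h.le ?_
        push_cast at ht1 ⊢
        linarith
  obtain ⟨i, hi⟩ := exists_nat_ge (t₀ / (1 / (2 * K)))
  have hδ : (0:ℝ) < 1 / (2 * K) := by positivity
  have ht₀i : t₀ ≤ i * (1 / (2 * K)) := by
    rw [div_le_iff₀ hδ] at hi; linarith
  have hfin := hmem t₀ x₀ hx₀ t₀ ht₀ le_rfl
  rw [main i t₀ ht₀ ht₀i] at hfin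
  linarith
end
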